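/- Let C be an algebraically closed field of characteristic zero and σ the C-linear automorphism of C(x) with σ(x) = x + 1. Suppose r ∈ C(x) is nonzero and f ∈ C(x) satisfies δ(r)/r + δ(σ(r))/σ(r) = σ²(f) − f, where δ = d/dx. Then δ(r)/r = σ(g) − g for some g ∈ C(x); in fact g = f works, because σ(f) − f − δ(r)/r satisfies σ(y) = −y and hence vanishes. -/

import Mathlib

open Polynomial

private lemma algMap_eq {C : Type*} [Field C] (p : C[X]) :
    algebraMap C[X] (RatFunc C) p = Polynomial.aeval RatFunc.X p := by
  have h : (IsScalarTower.toAlgHom C C[X] (RatFunc C)) =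
      (Polynomial.aeval RatFunc.X : C[X] →ₐ[C] RatFunc C) := by
    apply Polynomial.algHom_ext
    simp [RatFunc.algebraMap_X]
  exact DFunLike.congr_fun h p

private lemma sigma_algebraMap {C : Type*} [Field C]
    (σ : RatFunc C ≃ₐ[C] RatFunc C) (hσ : σ RatFunc.X = RatFunc.X + 1) (p : C[X]) :
    σ (algebraMap C[X] (RatFunc C) p) = algebraMap C[X] (RatFunc C) (p.comp (X + 1)) := by
  rw [algMap_eq, algMap_eq, comp_eq_aeval,
    ← Polynomial.aeval_algHom_apply (Polynomial.aeval RatFunc.X) (X + 1 : C[X]) p,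
    ← Polynomial.aeval_algHom_apply σ RatFunc.X p]
  simp [hσ]

private lemma skew_zero {C : Type*} [Field C] [CharZero C]
    (σ : RatFunc C ≃ₐ[C] RatFunc C) (hσ : σ RatFunc.X = RatFunc.X + 1)
    (y : RatFunc C) (hy : σ y = -y) : y = 0 := by
  by_contra hy0
  set p := y.num with hp
  set q := y.denom with hq
  have hpne : p ≠ 0 := RatFunc.num_ne_zero hy0
  have hqne : q ≠ 0 := y.denom_ne_zero
  have hX1 : natDegree (X + 1 : C[X]) ≠ 0 := by
    simpa using (natDegree_X_add_C (1 : C)) ▸ one_ne_zero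
  have hlc : leadingCoeff (X + 1 : C[X]) = 1 := by
    simpa using leadingCoeff_X_add_C (1 : C)
  have hp1 : (p.comp (X + 1)).leadingCoeff = p.leadingCoeff := by
    rw [leadingCoeff_comp hX1, hlc, one_pow, mul_one]
  have hq1 : (q.comp (X + 1)).leadingCoeff = q.leadingCoeff := by
    rw [leadingCoeff_comp hX1, hlc, one_pow, mul_one]
  have hq1ne : q.comp (X + 1) ≠ 0 := by
    intro h
    apply hqne
    rw [← leadingCoeff_eq_zero, ← hq1, h, leadingCoeff_zero]
  have hyrep := y.num_div_denom
  have key : algebraMap C[X] (RatFunc C) (p.comp (X + 1) * q)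
      = algebraMap C[X] (RatFunc C) (-(p * q.comp (X + 1))) := by
    rw [map_mul, map_neg, map_mul]
    have h1 : σ y = algebraMap C[X] (RatFunc C) (p.comp (X + 1)) /
        algebraMap C[X] (RatFunc C) (q.comp (X + 1)) := by
      rw [← hyrep, map_div₀, sigma_algebraMap σ hσ, sigma_algebraMap σ hσ]
    have h2 : (-y) = (-(algebraMap C[X] (RatFunc C) p)) / algebraMap C[X] (RatFunc C) q := by
      rw [← hyrep]; ring
    rw [h1, h2] at hy
    have := (div_eq_div_iff (RatFunc.algebraMap_ne_zero hq1ne)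
      (RatFunc.algebraMap_ne_zero hqne)).mp hy
    rw [this]; ring
  have keyP : p.comp (X + 1) * q = -(p * q.comp (X + 1)) :=
    RatFunc.algebraMap_injective C key
  have hlead := congrArg leadingCoeff keyP
  rw [leadingCoeff_mul, leadingCoeff_neg, leadingCoeff_mul, hp1, hq1] at hlead
  have : (2 : C) * (p.leadingCoeff * q.leadingCoeff) = 0 := by linear_combination hlead
  rcases mul_eq_zero.mp this with h | h
  · exact two_ne_zero h
  · rcases mul_eq_zero.mp h with h' | h'
    · exact hpne (leadingCoeff_eq_zero.mp h')
    · exact hqne (leadingCoeff_eq_zero.mp h')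

private lemma derivation_ext {C : Type*} [Field C]
    (D₁ D₂ : Derivation C (RatFunc C) (RatFunc C))
    (h : D₁ RatFunc.X = D₂ RatFunc.X) : D₁ = D₂ := by
  have hpoly : ∀ p : C[X], D₁ (algebraMap C[X] (RatFunc C) p)
      = D₂ (algebraMap C[X] (RatFunc C) p) := by
    intro p
    rw [algMap_eq]
    induction p using Polynomial.induction_on with
    | C a =>
        rw [Polynomial.aeval_C, Derivation.map_algebraMap, Derivation.map_algebraMap]
    | add p q hp hq => rw [map_add, map_add, map_add, hp, hq]
    | monomial n a ih =>
        have e : (Polynomial.aeval RatFunc.X) (Polynomial.C a * X ^ (n + 1)) =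
            (Polynomial.aeval RatFunc.X) (Polynomial.C a * X ^ n) * (RatFunc.X : RatFunc C) := by
          rw [pow_succ, ← mul_assoc, map_mul, Polynomial.aeval_X]
        rw [e, Derivation.leibniz, Derivation.leibniz, ih, h]
  ext y
  have hQ : algebraMap C[X] (RatFunc C) y.denom ≠ 0 :=
    RatFunc.algebraMap_ne_zero y.denom_ne_zero
  have hrep : y * algebraMap C[X] (RatFunc C) y.denom = algebraMap C[X] (RatFunc C) y.num :=
    ((div_eq_iff hQ).mp y.num_div_denom).symm
  have h1 := congrArg D₁ hrep
  have h2 := congrArg D₂ hrep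
  rw [Derivation.leibniz, smul_eq_mul, smul_eq_mul] at h1 h2
  rw [hpoly y.num, hpoly y.denom] at h1
  have := h1.trans h2.symm
  have hmul : D₁ y * algebraMap C[X] (RatFunc C) y.denom
      = D₂ y * algebraMap C[X] (RatFunc C) y.denom := by
    linear_combination this
  exact mul_right_cancel₀ hQ hmul

private noncomputable def conjDer {C : Type*} [Field C] (σ : RatFunc C ≃ₐ[C] RatFunc C)
    (δ : Derivation C (RatFunc C) (RatFunc C)) : Derivation C (RatFunc C) (RatFunc C) where
  toLinearMap := σ.symm.toLinearMap ∘ₗ ((δ : RatFunc C →ₗ[C] RatFunc C) ∘ₗ σ.toLinearMap)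
  map_one_eq_zero' := by simp
  leibniz' a b := by
    simp only [LinearMap.coe_comp, Function.comp_apply, AlgEquiv.toLinearMap_apply,
      Derivation.coeFn_coe, map_mul, Derivation.leibniz, smul_eq_mul, map_add,
      AlgEquiv.symm_apply_apply]

private lemma delta_sigma_comm {C : Type*} [Field C]
    (σ : RatFunc C ≃ₐ[C] RatFunc C) (hσ : σ RatFunc.X = RatFunc.X + 1)
    (δ : Derivation C (RatFunc C) (RatFunc C)) (hδ : δ RatFunc.X = 1) (z : RatFunc C) :
    δ (σ z) = σ (δ z) := by
  have hD : conjDer σ δ = δ := by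
    apply _root_.derivation_ext
    show σ.symm (δ (σ RatFunc.X)) = δ RatFunc.X
    rw [hσ, hδ]
    have : δ (RatFunc.X + 1) = 1 := by
      rw [map_add, hδ]; simp
    rw [this, map_one]
  have := DFunLike.congr_fun hD z
  have h2 : σ.symm (δ (σ z)) = δ z := this
  calc δ (σ z) = σ (σ.symm (δ (σ z))) := by rw [AlgEquiv.apply_symm_apply]
    _ = σ (δ z) := by rw [h2]

theorem stmt_4 {C : Type*} [Field C] [CharZero C] [IsAlgClosed C]
    (σ : RatFunc C ≃ₐ[C] RatFunc C) (hσ : σ RatFunc.X = RatFunc.X + 1)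
    (δ : Derivation C (RatFunc C) (RatFunc C)) (hδ : δ RatFunc.X = 1)
    (r f : RatFunc C) (hr : r ≠ 0)
    (heq : δ r / r + δ (σ r) / σ r = σ (σ f) - f) :
    δ r / r = σ f - f := by
  set y := σ f - f - δ r / r with hy
  have hσr : σ r ≠ 0 := by
    intro h
    exact hr (σ.injective (by rw [h, map_zero]))
  have hsy : σ y = σ (σ f) - σ f - δ (σ r) / σ r := by
    rw [hy, map_sub, map_sub, map_div₀, ← delta_sigma_comm σ hσ δ hδ r]
  have hsum : y + σ y = 0 := by
    rw [hy, hsy]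
    linear_combination -heq
  have hskew : σ y = -y := by linear_combination hsum
  have hy0 : y = 0 := skew_zero σ hσ y hskew
  rw [hy] at hy0
  linear_combination -hy0
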